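/- Let (X,σ,τ) be a chronologically dense Lorentzian metric space with a compatible causal relation ≤, and let ς = {z_k} be a future causal chain with I⁻(z_k) ≠ ∅ for every k. Then there exists a future chronological chain {x_k} with x_k ≪ z_k for every k and I⁻({x_k}) = I⁻(ς). If moreover z_k ≪̸ z_{k'} for all k < k', then I⁻(ς) ≠ X. -/

import Mathlib

open Topology Filter Set

noncomputable section

namespace BSC

variable {X : Type*}

/-! ## Basic chronology from a time separation -/

/-- The chronological relation induced by a time separation `τ`. -/
def chron (τ : X → X → ENNReal) (x y : X) : Prop := 0 < τ x y

/-- The chronological past of a set. -/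
def Iminus (τ : X → X → ENNReal) (S : Set X) : Set X := {y | ∃ x ∈ S, chron τ y x}

/-- The chronological future of a set. -/
def Iplus (τ : X → X → ENNReal) (S : Set X) : Set X := {y | ∃ x ∈ S, chron τ x y}

/-- A past set: `I⁻(S) = S`. -/
def IsPastSet (τ : X → X → ENNReal) (S : Set X) : Prop := Iminus τ S = S

/-- An indecomposable past set: a nonempty past set which is not the union of two past
sets properly contained in it. -/
def IsIP (τ : X → X → ENNReal) (S : Set X) : Prop :=
  S.Nonempty ∧ IsPastSet τ S ∧
    ¬ ∃ A B : Set X, IsPastSet τ A ∧ IsPastSet τ B ∧ A ⊂ S ∧ B ⊂ S ∧ A ∪ B = S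

/-- A terminal indecomposable past set: an IP which is not of the form `I⁻(x)`.
The future causal boundary is the set of TIPs. -/
def IsTIP (τ : X → X → ENNReal) (S : Set X) : Prop :=
  IsIP τ S ∧ ∀ x : X, S ≠ Iminus τ {x}

/-- A future chronological chain. -/
def FutureChain (τ : X → X → ENNReal) (c : ℕ → X) : Prop := ∀ n, chron τ (c n) (c (n + 1))

/-- A future causal chain with respect to a causal relation. -/
def FutureCausalChain (le : X → X → Prop) (c : ℕ → X) : Prop := ∀ n, le (c n) (c (n + 1))

/-! ## Lorentzian metric spaces -/

/-- A Lorentzian metric space structure on a topological space `X`. -/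
structure LorentzianMetric (X : Type*) [TopologicalSpace X] where
  tau : X → X → ENNReal
  lsc : LowerSemicontinuous fun p : X × X => tau p.1 p.2
  rev_tri : ∀ x y z, 0 < tau x y → 0 < tau y z → tau x y + tau y z ≤ tau x z

/-- A compatible causal relation on a Lorentzian metric space. -/
structure CompatibleCausal [TopologicalSpace X] (L : LorentzianMetric X) where
  rel : X → X → Prop
  refl : ∀ x, rel x x
  trans : ∀ x y z, rel x y → rel y z → rel x z
  chron_sub : ∀ x y, 0 < L.tau x y → rel x y
  rev_tri : ∀ x y z, rel x y → rel y z → L.tau x y + L.tau y z ≤ L.tau x z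

/-- Chronological density. -/
def ChronDense [TopologicalSpace X] (τ : X → X → ENNReal) : Prop :=
  (∀ x : X, (Iminus τ {x}).Nonempty →
    ∃ c : ℕ → X, FutureChain τ c ∧ (∀ n, chron τ (c n) x) ∧ Tendsto c atTop (𝓝 x)) ∧
  (∀ x : X, (Iplus τ {x}).Nonempty →
    ∃ c : ℕ → X, (∀ n, chron τ (c (n + 1)) (c n)) ∧ (∀ n, chron τ x (c n)) ∧
      Tendsto c atTop (𝓝 x))

/-- Distinguishing. -/
def Distinguishing (τ : X → X → ENNReal) : Prop :=
  (∀ x y : X, Iminus τ {x} = Iminus τ {y} → x = y) ∧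
  (∀ x y : X, Iplus τ {x} = Iplus τ {y} → x = y)

/-- The Alexandrov topology generated by the chronological diamonds. -/
def AlexandrovTopology (τ : X → X → ENNReal) : TopologicalSpace X :=
  TopologicalSpace.generateFrom {s | ∃ p q : X, s = Iplus τ {p} ∩ Iminus τ {q}}

/-- Strong causality: distinguishing plus the topology is the Alexandrov topology. -/
def StronglyCausal [t : TopologicalSpace X] (τ : X → X → ENNReal) : Prop :=
  Distinguishing τ ∧ t = AlexandrovTopology τ

/-- Causal simplicity with respect to a causal relation `le`. -/
def CausallySimple [TopologicalSpace X] (τ : X → X → ENNReal) (le : X → X → Prop) : Prop :=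
  StronglyCausal τ ∧ (∀ x : X, closure (Iplus τ {x}) = {y | le x y}) ∧
    (∀ x : X, closure (Iminus τ {x}) = {y | le y x})

/-! ## τ-length of curves -/

/-- The `τ`-length of the restriction of a curve `γ` to `[a,b]`: the infimum over all
partitions `a = t 0 ≤ t 1 ≤ ⋯ ≤ t n = b` of the sums of the time separations of
consecutive points. -/
def tauLength (τ : X → X → ENNReal) (γ : ℝ → X) (a b : ℝ) : ENNReal :=
  ⨅ (n : ℕ) (t : ℕ → ℝ) (_ : t 0 = a) (_ : t n = b) (_ : ∀ i < n, t i ≤ t (i + 1)),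
    ∑ i ∈ Finset.range n, τ (γ (t i)) (γ (t (i + 1)))

/-- The total `τ`-length of a curve defined on a set `I ⊆ ℝ`: the supremum of the
`τ`-lengths of its restrictions to compact subintervals. -/
def tauLengthOn (τ : X → X → ENNReal) (γ : ℝ → X) (I : Set ℝ) : ENNReal :=
  ⨆ (a : ℝ) (b : ℝ) (_ : a ∈ I) (_ : b ∈ I) (_ : a ≤ b), tauLength τ γ a b

/-! ## Lorentzian pre-length spaces -/

/-- A Lorentzian pre-length space structure on a metric space `X`. -/
structure LorPreLength (X : Type*) [MetricSpace X] where
  tau : X → X → ENNReal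
  chron : X → X → Prop
  causal : X → X → Prop
  causal_refl : ∀ x, causal x x
  causal_trans : ∀ x y z, causal x y → causal y z → causal x z
  chron_trans : ∀ x y z, chron x y → chron y z → chron x z
  chron_le_causal : ∀ x y, chron x y → causal x y
  lsc : LowerSemicontinuous fun p : X × X => tau p.1 p.2
  rev_tri : ∀ x y z, causal x y → causal y z → tau x y + tau y z ≤ tau x z
  pos_iff : ∀ x y, 0 < tau x y ↔ chron x y

variable [MetricSpace X]

/-- Locally Lipschitz on a subset of `ℝ`. -/
def LocallyLipschitzOnSet (γ : ℝ → X) (I : Set ℝ) : Prop :=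
  ∀ t ∈ I, ∃ K : NNReal, ∃ s ∈ 𝓝[I] t, LipschitzOnWith K γ s

/-- A future-directed causal curve on `I`. -/
def IsCausalCurveOn (L : LorPreLength X) (γ : ℝ → X) (I : Set ℝ) : Prop :=
  (∃ s ∈ I, ∃ t ∈ I, γ s ≠ γ t) ∧ LocallyLipschitzOnSet γ I ∧
    ∀ s ∈ I, ∀ t ∈ I, s < t → L.causal (γ s) (γ t)

/-- A future-directed timelike curve on `I`. -/
def IsTimelikeCurveOn (L : LorPreLength X) (γ : ℝ → X) (I : Set ℝ) : Prop :=
  (∃ s ∈ I, ∃ t ∈ I, γ s ≠ γ t) ∧ LocallyLipschitzOnSet γ I ∧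
    ∀ s ∈ I, ∀ t ∈ I, s < t → L.chron (γ s) (γ t)

/-- A future-directed null curve on `I`: causal with no two points chronologically related. -/
def IsNullCurveOn (L : LorPreLength X) (γ : ℝ → X) (I : Set ℝ) : Prop :=
  IsCausalCurveOn L γ I ∧ ∀ s ∈ I, ∀ t ∈ I, s < t → ¬ L.chron (γ s) (γ t)

/-- A timelike distance realizer from `p` to `q`, parametrised on `[a,b]`. -/
def IsTimelikeRealizer (L : LorPreLength X) (γ : ℝ → X) (a b : ℝ) (p q : X) : Prop :=
  a < b ∧ γ a = p ∧ γ b = q ∧ IsTimelikeCurveOn L γ (Set.Icc a b) ∧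
    L.tau p q = tauLength L.tau γ a b

/-- A timelike geodesic on `I`: locally a distance realizer. -/
def IsTimelikeGeodesicOn (L : LorPreLength X) (γ : ℝ → X) (I : Set ℝ) : Prop :=
  IsTimelikeCurveOn L γ I ∧
    ∀ t ∈ I, ∃ a b : ℝ, a ≤ t ∧ t ≤ b ∧ Set.Icc a b ⊆ I ∧ Set.Icc a b ∈ 𝓝[I] t ∧
      L.tau (γ a) (γ b) = tauLength L.tau γ a b

/-- Inextendibility for a curve defined on all of `ℝ`: no future or past endpoint. -/
def Inextendible (γ : ℝ → X) : Prop :=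
  (¬ ∃ p : X, Tendsto γ atTop (𝓝 p)) ∧ (¬ ∃ p : X, Tendsto γ atBot (𝓝 p))

/-! ## Lorentzian length spaces -/

/-- Locally causally closed. -/
def LocallyCausallyClosed (L : LorPreLength X) : Prop :=
  ∀ x : X, ∃ U ∈ 𝓝 x, ∀ (p q : ℕ → X) (p₀ q₀ : X), (∀ n, p n ∈ U) → (∀ n, q n ∈ U) →
    p₀ ∈ U → q₀ ∈ U → Tendsto p atTop (𝓝 p₀) → Tendsto q atTop (𝓝 q₀) →
    (∀ n, L.causal (p n) (q n)) → L.causal p₀ q₀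

/-- Causally path connected. -/
def CausallyPathConnected (L : LorPreLength X) : Prop :=
  (∀ x y, L.chron x y → ∃ (γ : ℝ → X) (a b : ℝ), a < b ∧ γ a = x ∧ γ b = y ∧
    IsTimelikeCurveOn L γ (Set.Icc a b)) ∧
  (∀ x y, L.causal x y → x ≠ y → ∃ (γ : ℝ → X) (a b : ℝ), a < b ∧ γ a = x ∧ γ b = y ∧
    IsCausalCurveOn L γ (Set.Icc a b))

/-- `Ω` is a localising neighbourhood of `x`. -/
def IsLocalisingNbhd (L : LorPreLength X) (x : X) (Ω : Set X) : Prop :=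
  IsOpen Ω ∧ x ∈ Ω ∧
  (∃ C : ENNReal, C ≠ ⊤ ∧ ∀ (γ : ℝ → X) (a b : ℝ), a < b →
    IsCausalCurveOn L γ (Set.Icc a b) → (∀ t ∈ Set.Icc a b, γ t ∈ Ω) →
    eVariationOn γ (Set.Icc a b) ≤ C) ∧
  (∀ y ∈ Ω, (Iplus L.tau {y} ∩ Ω).Nonempty ∧ (Iminus L.tau {y} ∩ Ω).Nonempty) ∧
  ∃ ω : X → X → ENNReal,
    (∀ p ∈ Ω, ∀ q ∈ Ω, ω p q ≠ ⊤) ∧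
    LowerSemicontinuousOn (fun pq : X × X => ω pq.1 pq.2) (Ω ×ˢ Ω) ∧
    (∀ p ∈ Ω, ∀ q ∈ Ω, ∀ r ∈ Ω, L.causal p q → L.causal q r → ω p q + ω q r ≤ ω p r) ∧
    (∀ p ∈ Ω, ∀ q ∈ Ω, (0 < ω p q ↔ L.chron p q)) ∧
    (∀ p ∈ Ω, ∀ q ∈ Ω, L.causal p q → p ≠ q →
      ∃ (γ : ℝ → X) (a b : ℝ), a < b ∧ γ a = p ∧ γ b = q ∧
        IsCausalCurveOn L γ (Set.Icc a b) ∧ (∀ t ∈ Set.Icc a b, γ t ∈ Ω) ∧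
        tauLength L.tau γ a b = ω p q ∧
        ∀ (γ' : ℝ → X) (a' b' : ℝ), a' < b' → γ' a' = p → γ' b' = q →
          IsCausalCurveOn L γ' (Set.Icc a' b') → (∀ t ∈ Set.Icc a' b', γ' t ∈ Ω) →
          tauLength L.tau γ' a' b' ≤ tauLength L.tau γ a b)

/-- `Ω` is a regular localising neighbourhood of `x`. -/
def IsRegularLocalisingNbhd (L : LorPreLength X) (x : X) (Ω : Set X) : Prop :=
  IsLocalisingNbhd L x Ω ∧
  ∀ p ∈ Ω, ∀ q ∈ Ω, L.chron p q →
    ∃ (γ : ℝ → X) (a b : ℝ), a < b ∧ γ a = p ∧ γ b = q ∧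
      IsTimelikeCurveOn L γ (Set.Icc a b) ∧ (∀ t ∈ Set.Icc a b, γ t ∈ Ω) ∧
      (∀ (γ' : ℝ → X) (a' b' : ℝ), a' < b' → γ' a' = p → γ' b' = q →
        IsCausalCurveOn L γ' (Set.Icc a' b') → (∀ t ∈ Set.Icc a' b', γ' t ∈ Ω) →
        tauLength L.tau γ' a' b' ≤ tauLength L.tau γ a b) ∧
      (∀ (γ' : ℝ → X) (a' b' : ℝ), a' < b' → γ' a' = p → γ' b' = q →
        IsCausalCurveOn L γ' (Set.Icc a' b') → (∀ t ∈ Set.Icc a' b', γ' t ∈ Ω) →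
        (∃ c d : ℝ, a' ≤ c ∧ c < d ∧ d ≤ b' ∧
          ∀ s ∈ Set.Icc c d, ∀ t ∈ Set.Icc c d, s < t → ¬ L.chron (γ' s) (γ' t)) →
        tauLength L.tau γ' a' b' < tauLength L.tau γ a b)

def Localisable (L : LorPreLength X) : Prop := ∀ x : X, ∃ Ω, IsLocalisingNbhd L x Ω

def RegularlyLocalisable (L : LorPreLength X) : Prop :=
  ∀ x : X, ∃ Ω, IsRegularLocalisingNbhd L x Ω

/-- `X` is a Lorentzian length space. -/
def IsLorLengthSpace (L : LorPreLength X) : Prop :=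
  LocallyCausallyClosed L ∧ CausallyPathConnected L ∧ Localisable L ∧
    ∀ x y, L.causal x y → x ≠ y →
      L.tau x y = ⨆ (γ : ℝ → X) (a : ℝ) (b : ℝ) (_ : a < b) (_ : γ a = x) (_ : γ b = y)
        (_ : IsCausalCurveOn L γ (Set.Icc a b)), tauLength L.tau γ a b

/-- Strong causality for pre-length spaces: the metric topology is generated by the
chronological diamonds. -/
def PLSStronglyCausal (L : LorPreLength X) : Prop :=
  (inferInstance : TopologicalSpace X) = TopologicalSpace.generateFrom
    {s : Set X | ∃ p q : X, s = {z | L.chron p z} ∩ {z | L.chron z q}}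

/-- Global hyperbolicity for pre-length spaces. -/
def GloballyHyperbolic (L : LorPreLength X) : Prop :=
  PLSStronglyCausal L ∧ ∀ x y : X, IsCompact {z : X | L.causal x z ∧ L.causal z y}

/-- Timelike geodesic connectedness: chronologically related points are joined by
timelike distance realizers. -/
def TimelikeGeodConnected (L : LorPreLength X) : Prop :=
  ∀ x y, L.chron x y → ∃ (γ : ℝ → X) (a b : ℝ), IsTimelikeRealizer L γ a b x y

/-- Timelike geodesic prolongation. -/
def TimelikeGeodesicProlongation (L : LorPreLength X) : Prop :=
  ∀ (γ : ℝ → X) (a b : ℝ), a < b → IsTimelikeCurveOn L γ (Set.Icc a b) →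
    L.tau (γ a) (γ b) = tauLength L.tau γ a b →
    ∃ ε > (0 : ℝ), ∃ γ' : ℝ → X, (∀ t ∈ Set.Icc a b, γ' t = γ t) ∧
      IsTimelikeGeodesicOn L γ' (Set.Ioo (a - ε) (b + ε))

/-! ## The Minkowski plane 𝕃² (first coordinate = time) -/

def mCausal (p q : ℝ × ℝ) : Prop := |q.2 - p.2| ≤ q.1 - p.1
def mChron (p q : ℝ × ℝ) : Prop := |q.2 - p.2| < q.1 - p.1

open Classical in
/-- The time separation of the Minkowski plane. -/
def mTau (p q : ℝ × ℝ) : ℝ :=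
  if mCausal p q then Real.sqrt ((q.1 - p.1) ^ 2 - (q.2 - p.2) ^ 2) else 0

/-- The Minkowski bilinear form on `ℝ²` (first coordinate = time). -/
def mForm (u v : ℝ × ℝ) : ℝ := -(u.1 * v.1) + u.2 * v.2

/-- The Lorentzian norm of a timelike vector. -/
def mNorm (u : ℝ × ℝ) : ℝ := Real.sqrt (-(mForm u u))

/-! ## Curvature bounds -/

/-- `x` lies on the side `γ` (from `pi` to `pj`, parametrised on `[a,b]`) of a timelike
geodesic triangle, with corresponding point `xb` on the comparison side from `qi` to `qj`. -/
def OnSideCorresp (L : LorPreLength X) (γ : ℝ → X) (a b : ℝ) (pi pj : X)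
    (qi qj : ℝ × ℝ) (x : X) (xb : ℝ × ℝ) : Prop :=
  (∃ t ∈ Set.Icc a b, γ t = x) ∧
  (∃ s ∈ Set.Icc (0 : ℝ) 1, xb = qi + s • (qj - qi)) ∧
  ENNReal.ofReal (mTau qi xb) = L.tau pi x ∧ ENNReal.ofReal (mTau xb qj) = L.tau x pj

/-- A point of a timelike geodesic triangle together with its corresponding point
in a comparison triangle in `𝕃²`: the pair lies on one of the three sides. -/
def PointOnTriangle (L : LorPreLength X) (γ₁₂ γ₂₃ γ₁₃ : ℝ → X)
    (a₁₂ b₁₂ a₂₃ b₂₃ a₁₃ b₁₃ : ℝ) (p₁ p₂ p₃ : X) (q₁ q₂ q₃ : ℝ × ℝ)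
    (x : X) (xb : ℝ × ℝ) : Prop :=
  OnSideCorresp L γ₁₂ a₁₂ b₁₂ p₁ p₂ q₁ q₂ x xb ∨
  OnSideCorresp L γ₂₃ a₂₃ b₂₃ p₂ p₃ q₂ q₃ x xb ∨
  OnSideCorresp L γ₁₃ a₁₃ b₁₃ p₁ p₃ q₁ q₃ x xb

/-- Global timelike curvature bounded below by `0`: for any timelike geodesic triangle,
any comparison triangle in `𝕃²`, and any pair of points on the sides with their
corresponding points, `τ(x,y) ≤ τ̄(x̄,ȳ)`. -/
def CurvBoundedBelowZero (L : LorPreLength X) : Prop :=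
  ∀ (p₁ p₂ p₃ : X), L.chron p₁ p₂ → L.chron p₂ p₃ →
  ∀ (γ₁₂ γ₂₃ γ₁₃ : ℝ → X) (a₁₂ b₁₂ a₂₃ b₂₃ a₁₃ b₁₃ : ℝ),
    IsTimelikeRealizer L γ₁₂ a₁₂ b₁₂ p₁ p₂ →
    IsTimelikeRealizer L γ₂₃ a₂₃ b₂₃ p₂ p₃ →
    IsTimelikeRealizer L γ₁₃ a₁₃ b₁₃ p₁ p₃ →
  ∀ (q₁ q₂ q₃ : ℝ × ℝ), mChron q₁ q₂ → mChron q₂ q₃ →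
    ENNReal.ofReal (mTau q₁ q₂) = L.tau p₁ p₂ →
    ENNReal.ofReal (mTau q₂ q₃) = L.tau p₂ p₃ →
    ENNReal.ofReal (mTau q₁ q₃) = L.tau p₁ p₃ →
  ∀ (x y : X) (xb yb : ℝ × ℝ),
    PointOnTriangle L γ₁₂ γ₂₃ γ₁₃ a₁₂ b₁₂ a₂₃ b₂₃ a₁₃ b₁₃ p₁ p₂ p₃ q₁ q₂ q₃ x xb →
    PointOnTriangle L γ₁₂ γ₂₃ γ₁₃ a₁₂ b₁₂ a₂₃ b₂₃ a₁₃ b₁₃ p₁ p₂ p₃ q₁ q₂ q₃ y yb →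
    L.tau x y ≤ ENNReal.ofReal (mTau xb yb)

/-! ## The Lorentzian metric product Σ × ℝ -/

section Product

variable {S : Type*} [MetricSpace S]

def prodCausal (p q : S × ℝ) : Prop := dist p.1 q.1 ≤ q.2 - p.2
def prodChron (p q : S × ℝ) : Prop := dist p.1 q.1 < q.2 - p.2

open Classical in
/-- The time separation of the Lorentzian metric product, real-valued. -/
def prodTauReal (p q : S × ℝ) : ℝ :=
  if prodCausal p q then Real.sqrt ((q.2 - p.2) ^ 2 - dist p.1 q.1 ^ 2) else 0

/-- The time separation of the Lorentzian metric product. -/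
def prodTau (p q : S × ℝ) : ENNReal := ENNReal.ofReal (prodTauReal p q)

end Product

/-! ## Alexandrov geometry of metric spaces -/

/-- A unit-speed geodesic from `a` to `b`. -/
def UnitSpeedGeodesic {S : Type*} [MetricSpace S] (γ : ℝ → S) (a b : S) : Prop :=
  γ 0 = a ∧ γ (dist a b) = b ∧
    ∀ s ∈ Set.Icc (0 : ℝ) (dist a b), ∀ t ∈ Set.Icc (0 : ℝ) (dist a b),
      dist (γ s) (γ t) = |s - t|

/-- A strictly intrinsic (geodesic) metric space. -/
def StrictlyIntrinsic (S : Type*) [MetricSpace S] : Prop :=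
  ∀ a b : S, ∃ γ : ℝ → S, UnitSpeedGeodesic γ a b

/-- Alexandrov curvature bounded below by `0`: distances between points on the sides of a
geodesic triangle dominate the corresponding distances in a Euclidean comparison triangle. -/
def AlexCurvNonneg (S : Type*) [MetricSpace S] : Prop :=
  ∀ (a b c : S) (γab γac : ℝ → S), UnitSpeedGeodesic γab a b → UnitSpeedGeodesic γac a c →
  ∀ ab bb cb : EuclideanSpace ℝ (Fin 2),
    dist ab bb = dist a b → dist ab cb = dist a c → dist bb cb = dist b c →
  ∀ s ∈ Set.Icc (0 : ℝ) (dist a b), ∀ t ∈ Set.Icc (0 : ℝ) (dist a c),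
  ∀ xb yb : EuclideanSpace ℝ (Fin 2),
    xb = ab + (s / dist a b) • (bb - ab) → yb = ab + (t / dist a c) • (cb - ab) →
    dist xb yb ≤ dist (γab s) (γac t)

end BSC

open BSC

/-- a future causal chain with nonempty pasts admits a future
chronological chain with the same past; if no two members of the causal chain are
chronologically related, this past is not all of `X`. -/
theorem chron_chain_same_past {X : Type*} [TopologicalSpace X]
    (L : LorentzianMetric X) (C : CompatibleCausal L)
    (hdense : ChronDense L.tau)
    (z : ℕ → X) (hchain : FutureCausalChain C.rel z)
    (hpast : ∀ k, (Iminus L.tau {z k}).Nonempty) :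
    (∃ x : ℕ → X, FutureChain L.tau x ∧ (∀ k, chron L.tau (x k) (z k)) ∧
      Iminus L.tau (Set.range x) = Iminus L.tau (Set.range z)) ∧
    ((∀ k k' : ℕ, k < k' → ¬ chron L.tau (z k) (z k')) →
      Iminus L.tau (Set.range z) ≠ Set.univ) := by
  classical
  choose cc hccchain hccz hcctend using fun k => hdense.1 (z k) (hpast k)
  have zle : ∀ j k, j ≤ k → C.rel (z j) (z k) := by
    intro j k hjk
    induction hjk with
    | refl => exact C.refl _
    | step h ih => exact C.trans _ _ _ ih (hchain _)
  have push : ∀ {w a b : X}, 0 < L.tau w a → C.rel a b → 0 < L.tau w b := by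
    intro w a b h hab
    have h2 := C.rev_tri w a b (C.chron_sub _ _ h) hab
    exact lt_of_lt_of_le (lt_of_lt_of_le h le_self_add) h2
  have ev : ∀ (K : ℕ) (w : X), 0 < L.tau w (z K) → ∀ᶠ n in atTop, 0 < L.tau w (cc K n) :=
    fun K w h => (tendsto_const_nhds.prodMk_nhds (hcctend K)).eventually (L.lsc (w, z K) 0 h)
  have zkfirst : ∀ k, (Iminus L.tau {z k}).Nonempty → True := fun _ _ => trivial
  set P : ℕ → X → Prop := fun k w =>
    0 < L.tau w (z k) ∧ ∀ j ≤ k, ∀ i ≤ k, 0 < L.tau (cc j i) w with hP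
  have step : ∀ (K : ℕ) (w : X), 0 < L.tau w (z K) → ∃ v, 0 < L.tau w v ∧ P K v := by
    intro K w hw
    have h1 : ∀ᶠ n in atTop, 0 < L.tau w (cc K n) := ev K w hw
    have h2 : ∀ᶠ n in atTop, ∀ j ∈ Finset.range (K + 1), ∀ i ∈ Finset.range (K + 1),
        0 < L.tau (cc j i) (cc K n) := by
      rw [eventually_all_finset]
      intro j hj
      rw [eventually_all_finset]
      intro i _
      exact ev K _ (push (hccz j i) (zle j K (Nat.lt_succ_iff.mp (Finset.mem_range.mp hj))))
    obtain ⟨n, hn1, hn2⟩ := (h1.and h2).exists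
    exact ⟨cc K n, hn1, hccz K n, fun j hj i hi =>
      hn2 j (Finset.mem_range.mpr (Nat.lt_succ_of_le hj)) i
        (Finset.mem_range.mpr (Nat.lt_succ_of_le hi))⟩
  constructor
  · obtain ⟨w0, p, hp, hw0⟩ := hpast 0
    rw [Set.mem_singleton_iff] at hp
    subst hp
    have hw0' : 0 < L.tau w0 (z 0) := hw0
    let f : ∀ k : ℕ, {v : X // P k v} := fun k =>
      Nat.rec (motive := fun k => {v : X // P k v})
        ⟨(step 0 w0 hw0').choose, (step 0 w0 hw0').choose_spec.2⟩
        (fun m ih =>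
          ⟨(step (m + 1) ih.1 (push ih.2.1 (hchain m))).choose,
            (step (m + 1) ih.1 (push ih.2.1 (hchain m))).choose_spec.2⟩) k
    refine ⟨fun k => (f k).1, ?_, fun k => (f k).2.1, ?_⟩
    · intro k
      exact (step (k + 1) (f k).1 (push (f k).2.1 (hchain k))).choose_spec.1
    · ext y
      simp only [Iminus, Set.mem_setOf_eq, Set.mem_range]
      constructor
      · rintro ⟨_, ⟨k, rfl⟩, hy⟩
        exact ⟨z k, ⟨k, rfl⟩,
          lt_of_lt_of_le (lt_of_lt_of_le hy le_self_add) (L.rev_tri y _ _ hy (f k).2.1)⟩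
      · rintro ⟨_, ⟨k, rfl⟩, hy⟩
        obtain ⟨i, hi⟩ := (ev k y hy).exists
        have h2 : 0 < L.tau (cc k i) (f (max k i)).1 :=
          (f (max k i)).2.2 k (le_max_left _ _) i (le_max_right _ _)
        exact ⟨(f (max k i)).1, ⟨max k i, rfl⟩,
          lt_of_lt_of_le (lt_of_lt_of_le hi le_self_add) (L.rev_tri y _ _ hi h2)⟩
  · intro hnc heq
    have hz0 : z 0 ∈ Iminus L.tau (Set.range z) := heq ▸ Set.mem_univ _
    obtain ⟨_, ⟨k, rfl⟩, h0⟩ := hz0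
    match k with
    | 0 =>
      have h1 := C.rev_tri (z 0) (z 0) (z 1) (C.refl _) (hchain 0)
      have hz01 : 0 < L.tau (z 0) (z 1) := by
        rcases eq_or_ne (L.tau (z 0) (z 1)) 0 with h | h
        · rw [h, add_zero] at h1
          exact absurd (le_antisymm h1 zero_le) (ne_of_gt h0)
        · exact pos_iff_ne_zero.mpr h
      exact hnc 0 1 one_pos hz01
    | (k + 1) => exact hnc 0 (k + 1) (Nat.succ_pos k) h0
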